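/- The poset (esTam_n, ⊲) is a lattice. Moreover, the meet of two fb-tableaux M and N of size n is the fb-tableau L determined as follows: (a) the root belongs to L; (b) in each column j with 1 ≤ j ≤ n−1, the up-arrow of L is placed at the lower of the positions of the up-arrows of M and N in that column; (c) in each row i with 2 ≤ i ≤ n, let c be the leftmost of the positions of the left-arrows of M and N in that row; the left-arrow of L is placed at c if c does not lie strictly above the up-arrow of L in its column, and otherwise at the nearest cell to the left of c that does not lie strictly above the up-arrow of L in its column; (d) a free cell c of L belongs to L if and only if (c ∈ M or c is not free in M) and (c ∈ N or c is not free in N); L contains no cells other than the root, its arrows, and the free cells prescribed in (d). -/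
import Mathlib


open scoped Classical

namespace EsTam

/-- A cell `(i, j)`: `i` is the row index, `j` the column index. -/
abbrev Cell := ℕ × ℕ

/-- Membership in the staircase shape of size `n`: rows `1` and `2` consist of the
cells `(i, j)` with `1 ≤ j ≤ n`, and row `i` for `3 ≤ i ≤ n` consists of the cells
`(i, j)` with `i - 1 ≤ j ≤ n`. -/
def IsCell (n : ℕ) (c : Cell) : Prop :=
  1 ≤ c.1 ∧ c.1 ≤ n ∧ 1 ≤ c.2 ∧ c.2 ≤ n ∧ (c.1 ≤ 2 ∨ c.1 - 1 ≤ c.2)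

/-- The root cell `(1, n)`. -/
def root (n : ℕ) : Cell := (1, n)

/-- The border cells `(i, i - 1)` for `2 ≤ i ≤ n`. -/
def IsBorder (n : ℕ) (c : Cell) : Prop :=
  2 ≤ c.1 ∧ c.1 ≤ n ∧ c.2 = c.1 - 1

/-- An fb-tableau of size `n`: a set of cells of the staircase shape containing
the root and all border cells, and such that every cell other than the root has a
cell of the tableau strictly to its left in its row (same `i`, larger `j`) or
strictly above it in its column (same `j`, smaller `i`). -/
structure FB (n : ℕ) where
  cells : Set Cell
  isCell_of_mem : ∀ c ∈ cells, IsCell n c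
  root_mem : root n ∈ cells
  border_mem : ∀ c : Cell, IsBorder n c → c ∈ cells
  supported : ∀ c ∈ cells, c ≠ root n →
    (∃ j', c.2 < j' ∧ ((c.1, j') : Cell) ∈ cells) ∨
    (∃ i', i' < c.1 ∧ ((i', c.2) : Cell) ∈ cells)

variable {n : ℕ}

/-- `c` is a left-arrow of `T`: a cell of `T`, other than the root, with no cell of
`T` strictly to its left in its row. -/
def IsLeftArrow (T : FB n) (c : Cell) : Prop :=
  c ∈ T.cells ∧ c ≠ root n ∧ ∀ j', c.2 < j' → ((c.1, j') : Cell) ∉ T.cells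

/-- `c` is an up-arrow of `T`: a cell of `T`, other than the root, with no cell of
`T` strictly above it in its column. -/
def IsUpArrow (T : FB n) (c : Cell) : Prop :=
  c ∈ T.cells ∧ c ≠ root n ∧ ∀ i', i' < c.1 → ((i', c.2) : Cell) ∉ T.cells

/-- The row space of `T`: cells lying, in their row, weakly to the right of the
root or of a left-arrow of `T`. -/
def RowSp (T : FB n) : Set Cell :=
  {c | IsCell n c ∧ ∃ j', c.2 ≤ j' ∧
    (((c.1, j') : Cell) = root n ∨ IsLeftArrow T (c.1, j'))}

/-- The column space of `T`: cells lying, in their column, weakly below the root or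
an up-arrow of `T`. -/
def ColSp (T : FB n) : Set Cell :=
  {c | IsCell n c ∧ ∃ i', i' ≤ c.1 ∧
    (((i', c.2) : Cell) = root n ∨ IsUpArrow T (i', c.2))}

/-- `c` is a free cell of `T`: it lies strictly below the up-arrow of `T` in its
column and strictly to the right of the left-arrow of `T` in its row. -/
def IsFree (T : FB n) (c : Cell) : Prop :=
  IsCell n c ∧ (∃ i', i' < c.1 ∧ IsUpArrow T (i', c.2)) ∧
    (∃ j', c.2 < j' ∧ IsLeftArrow T (c.1, j'))

/-- The relation `S ⊲ T` on fb-tableaux of size `n`. -/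
def Lhd (S T : FB n) : Prop :=
  ColSp S ⊆ ColSp T ∧ RowSp T ⊆ RowSp S ∧
    ∀ c : Cell, IsFree S c → IsFree T c → c ∈ S.cells → c ∈ T.cells

/-- `T` covers `S` in `esTam n`. -/
def CovRel (S T : FB n) : Prop :=
  Lhd S T ∧ S ≠ T ∧ ∀ U : FB n, Lhd S U → Lhd U T → U = S ∨ U = T

/-- `m` is the greatest lower bound of `x` and `y` in `esTam n`. -/
def IsMeet (x y m : FB n) : Prop :=
  Lhd m x ∧ Lhd m y ∧ ∀ t : FB n, Lhd t x → Lhd t y → Lhd t m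

/-- `j` is the least upper bound of `x` and `y` in `esTam n`. -/
def IsJoin (x y j : FB n) : Prop :=
  Lhd x j ∧ Lhd y j ∧ ∀ t : FB n, Lhd x t → Lhd y t → Lhd j t

/-- `T` is join-irreducible: it covers exactly one element. -/
def JoinIrr (T : FB n) : Prop := ∃! S : FB n, CovRel S T

/-- `T` is meet-irreducible: it is covered by exactly one element. -/
def MeetIrr (T : FB n) : Prop := ∃! S : FB n, CovRel T S

/-- A strict chain `f 0 ⊲ f 1 ⊲ ⋯ ⊲ f m` of length `m`. -/
def IsStrictChain {m : ℕ} (f : Fin (m + 1) → FB n) : Prop :=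
  ∀ i j : Fin (m + 1), i < j → Lhd (f i) (f j) ∧ f i ≠ f j

/-- `T` is small: every cell of `T` other than the root is an arrow. -/
def IsSmall (T : FB n) : Prop :=
  ∀ c ∈ T.cells, c ≠ root n → IsLeftArrow T c ∨ IsUpArrow T c

/-- `T` is binary: `T` has no free cells. -/
def IsBinary (T : FB n) : Prop := ∀ c : Cell, ¬ IsFree T c

/-- `c` lies strictly above the up-arrow of `T` in its column. -/
def PointedUp (T : FB n) (c : Cell) : Prop :=
  ∃ i', c.1 < i' ∧ IsUpArrow T (i', c.2)

/-- `c` is pointed by a left-arrow of `T`: it lies strictly to the left of the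
left-arrow of `T` in its row. -/
def PointedLeft (T : FB n) (c : Cell) : Prop :=
  ∃ j', j' < c.2 ∧ IsLeftArrow T (c.1, j')

end EsTam

namespace EsTam

/-- The description of the meet `L` of `M` and `N`:
(a) the root belongs to `L`;
(b) in each column, the up-arrow of `L` is at the lower (larger row index) of the
positions of the up-arrows of `M` and `N`;
(c) in each row, letting `c` be the leftmost (larger column index) of the positions
of the left-arrows of `M` and `N`, the left-arrow of `L` is at `c` if `c` does not
lie strictly above the up-arrow of `L` in its column, and otherwise at the nearest
cell to the left of `c` not lying strictly above the up-arrow of `L` in its column;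
(d) a free cell `c` of `L` belongs to `L` iff (`c ∈ M` or `c` is not free in `M`)
and (`c ∈ N` or `c` is not free in `N`); and `L` contains no cells other than the
root, its arrows, and the free cells prescribed in (d). -/
def MeetSpec (n : ℕ) (M N L : FB n) : Prop :=
  root n ∈ L.cells ∧
  (∀ j a b : ℕ, IsUpArrow M (a, j) → IsUpArrow N (b, j) →
    IsUpArrow L (max a b, j)) ∧
  (∀ i jM jN : ℕ, IsLeftArrow M (i, jM) → IsLeftArrow N (i, jN) →
    ((¬ PointedUp L (i, max jM jN) → IsLeftArrow L (i, max jM jN)) ∧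
     (PointedUp L (i, max jM jN) →
        ∃ j', max jM jN < j' ∧ IsLeftArrow L (i, j') ∧ ¬ PointedUp L (i, j') ∧
          ∀ j'', max jM jN < j'' → j'' < j' → PointedUp L (i, j'')))) ∧
  (∀ c : Cell, IsFree L c → (c ∈ L.cells ↔
      ((c ∈ M.cells ∨ ¬ IsFree M c) ∧ (c ∈ N.cells ∨ ¬ IsFree N c)))) ∧
  (∀ c ∈ L.cells, c = root n ∨ IsLeftArrow L c ∨ IsUpArrow L c ∨ IsFree L c)

variable {n : ℕ}

theorem FB.ext' {S T : FB n} (h : S.cells = T.cells) : S = T := by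
  cases S; cases T; simp_all

/-! ### Basic facts about arrows -/

theorem upArrow_unique {T : FB n} {a b j : ℕ} (ha : IsUpArrow T (a, j))
    (hb : IsUpArrow T (b, j)) : a = b := by
  rcases lt_trichotomy a b with h | h | h
  · exact absurd ha.1 (hb.2.2 a h)
  · exact h
  · exact absurd hb.1 (ha.2.2 b h)

theorem leftArrow_unique {T : FB n} {a b i : ℕ} (ha : IsLeftArrow T (i, a))
    (hb : IsLeftArrow T (i, b)) : a = b := by
  rcases lt_trichotomy a b with h | h | h
  · exact absurd hb.1 (ha.2.2 b h)
  · exact h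
  · exact absurd ha.1 (hb.2.2 a h)

theorem upArrow_bounds {T : FB n} {i j : ℕ} (h : IsUpArrow T (i, j)) :
    1 ≤ i ∧ i ≤ n ∧ 1 ≤ j ∧ j < n ∧ i ≤ j + 1 := by
  have hc := T.isCell_of_mem _ h.1
  obtain ⟨h1, h2, h3, h4, h5⟩ := hc
  simp only at h1 h2 h3 h4 h5
  have hjn : j < n := by
    rcases Nat.lt_or_ge j n with h' | h'
    · exact h'
    · have hj : j = n := le_antisymm h4 h'
      subst hj
      rcases Nat.lt_or_ge 1 i with h'' | h''
      · exact absurd T.root_mem (h.2.2 1 h'')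
      · have hi1 : i = 1 := by omega
        exact absurd (by simp [root, hi1]) h.2.1
  exact ⟨h1, h2, h3, hjn, by omega⟩

theorem leftArrow_bounds {T : FB n} {i j : ℕ} (h : IsLeftArrow T (i, j)) :
    2 ≤ i ∧ i ≤ n ∧ 1 ≤ j ∧ j ≤ n ∧ i - 1 ≤ j := by
  have hc := T.isCell_of_mem _ h.1
  obtain ⟨h1, h2, h3, h4, h5⟩ := hc
  simp only at h1 h2 h3 h4 h5
  have hi2 : 2 ≤ i := by
    rcases Nat.lt_or_ge i 2 with h' | h'
    · exfalso
      have hi1 : i = 1 := by omega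
      subst hi1
      rcases Nat.lt_or_ge j n with hj | hj
      · exact h.2.2 n hj T.root_mem
      · have hjn : j = n := by omega
        exact h.2.1 (by simp [root, hjn])
    · exact h'
  exact ⟨hi2, h2, h3, h4, by omega⟩

theorem upArrow_le_of_mem {T : FB n} {a i j : ℕ} (h : IsUpArrow T (a, j))
    (hm : ((i, j) : Cell) ∈ T.cells) : a ≤ i := by
  by_contra h'
  exact h.2.2 i (by omega) hm

theorem le_leftArrow_of_mem {T : FB n} {b i j : ℕ} (h : IsLeftArrow T (i, b))
    (hm : ((i, j) : Cell) ∈ T.cells) : j ≤ b := by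
  by_contra h'
  exact h.2.2 j (by omega) hm

theorem upArrow_exists (T : FB n) {j : ℕ} (hj : 1 ≤ j) (hjn : j < n) :
    ∃ i, IsUpArrow T (i, j) := by
  have hb : ((j + 1, j) : Cell) ∈ T.cells :=
    T.border_mem _ ⟨by omega, by omega, by simp⟩
  have hex : ∃ i, ((i, j) : Cell) ∈ T.cells := ⟨j + 1, hb⟩
  have hmem : ((Nat.find hex, j) : Cell) ∈ T.cells := Nat.find_spec hex
  refine ⟨Nat.find hex, hmem, ?_, fun i' hi' => Nat.find_min hex hi'⟩
  intro hr
  have : j = n := by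
    have := congrArg Prod.snd hr
    simpa [root] using this
  omega

theorem leftArrow_exists (T : FB n) {i : ℕ} (hi : 2 ≤ i) (hin : i ≤ n) :
    ∃ j, IsLeftArrow T (i, j) := by
  have hb : ((i, i - 1) : Cell) ∈ T.cells :=
    T.border_mem _ ⟨hi, hin, rfl⟩
  have hpos : i - 1 ≤ Nat.findGreatest (fun j => ((i, j) : Cell) ∈ T.cells) n :=
    Nat.le_findGreatest (by omega) hb
  have hmem : ((i, Nat.findGreatest (fun j => ((i, j) : Cell) ∈ T.cells) n) : Cell) ∈ T.cells := by
    refine Nat.findGreatest_spec (P := fun j => ((i, j) : Cell) ∈ T.cells) (m := i - 1) ?_ hb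
    omega
  refine ⟨_, hmem, ?_, fun j' hj' hm => ?_⟩
  · intro hr
    have : i = 1 := by
      have := congrArg Prod.fst hr
      simpa [root] using this
    omega
  · have hj'n : j' ≤ n := (T.isCell_of_mem _ hm).2.2.2.1
    exact absurd hm (Nat.findGreatest_is_greatest hj' hj'n)

/-! ### The arrow coordinates `uOf` and `lOf` -/

noncomputable def uOf (T : FB n) (j : ℕ) : ℕ :=
  if h : ∃ i, IsUpArrow T (i, j) then h.choose else 0

noncomputable def lOf (T : FB n) (i : ℕ) : ℕ :=
  if h : ∃ j, IsLeftArrow T (i, j) then h.choose else 0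

theorem uOf_eq {T : FB n} {i j : ℕ} (h : IsUpArrow T (i, j)) : uOf T j = i := by
  have hex : ∃ i, IsUpArrow T (i, j) := ⟨i, h⟩
  rw [uOf, dif_pos hex]
  exact upArrow_unique hex.choose_spec h

theorem lOf_eq {T : FB n} {i j : ℕ} (h : IsLeftArrow T (i, j)) : lOf T i = j := by
  have hex : ∃ j, IsLeftArrow T (i, j) := ⟨j, h⟩
  rw [lOf, dif_pos hex]
  exact leftArrow_unique hex.choose_spec h

theorem isUpArrow_uOf (T : FB n) {j : ℕ} (hj : 1 ≤ j) (hjn : j < n) :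
    IsUpArrow T (uOf T j, j) := by
  obtain ⟨i, hi⟩ := upArrow_exists T hj hjn
  rwa [uOf_eq hi]

theorem isLeftArrow_lOf (T : FB n) {i : ℕ} (hi : 2 ≤ i) (hin : i ≤ n) :
    IsLeftArrow T (i, lOf T i) := by
  obtain ⟨j, hj⟩ := leftArrow_exists T hi hin
  rwa [lOf_eq hj]

theorem uOf_bounds (T : FB n) {j : ℕ} (hj : 1 ≤ j) (hjn : j < n) :
    1 ≤ uOf T j ∧ uOf T j ≤ n ∧ uOf T j ≤ j + 1 := by
  have h := upArrow_bounds (isUpArrow_uOf T hj hjn)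
  exact ⟨h.1, h.2.1, h.2.2.2.2⟩

theorem lOf_bounds (T : FB n) {i : ℕ} (hi : 2 ≤ i) (hin : i ≤ n) :
    i - 1 ≤ lOf T i ∧ lOf T i ≤ n := by
  have h := leftArrow_bounds (isLeftArrow_lOf T hi hin)
  exact ⟨h.2.2.2.2, h.2.2.2.1⟩

/-- Analogue of condition (V3): the left-arrow lies strictly below the up-arrow of
its column (when that column is not column `n`). -/
theorem uOf_lOf_lt (T : FB n) {i : ℕ} (hi : 2 ≤ i) (hin : i ≤ n)
    (hl : lOf T i < n) : uOf T (lOf T i) < i := by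
  have hla := isLeftArrow_lOf T hi hin
  have hlb := leftArrow_bounds hla
  rcases T.supported _ hla.1 hla.2.1 with ⟨j', hj', hm⟩ | ⟨i', hi', hm⟩
  · exact absurd hm (hla.2.2 j' hj')
  · have hup := isUpArrow_uOf T (by omega : 1 ≤ lOf T i) hl
    have := upArrow_le_of_mem hup hm
    omega

/-- Analogue of condition (V4): the up-arrow lies strictly left (smaller column)
of the left-arrow of its row (when that row is not row `1`). -/
theorem lt_lOf_uOf (T : FB n) {j : ℕ} (hj : 1 ≤ j) (hjn : j < n)
    (h2 : 2 ≤ uOf T j) : j < lOf T (uOf T j) := by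
  have hua := isUpArrow_uOf T hj hjn
  have hub := upArrow_bounds hua
  rcases T.supported _ hua.1 hua.2.1 with ⟨j', hj', hm⟩ | ⟨i', hi', hm⟩
  · have hla := isLeftArrow_lOf T h2 hub.2.1
    have := le_leftArrow_of_mem hla hm
    omega
  · exact absurd hm (hua.2.2 i' hi')

/-! ### Characterizations of the spaces, freeness and the order -/

theorem mem_colSp {T : FB n} {c : Cell} :
    c ∈ ColSp T ↔ IsCell n c ∧ (c.2 = n ∨ uOf T c.2 ≤ c.1) := by
  constructor
  · rintro ⟨hc, i', hi', hroot | hup⟩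
    · refine ⟨hc, Or.inl ?_⟩
      have := congrArg Prod.snd hroot
      simpa [root] using this
    · exact ⟨hc, Or.inr (by rw [uOf_eq hup]; exact hi')⟩
  · rintro ⟨hc, hn | hu⟩
    · exact ⟨hc, 1, hc.1, Or.inl (by simp [root, hn])⟩
    · rcases Nat.lt_or_ge c.2 n with hjn | hjn
      · exact ⟨hc, uOf T c.2, hu, Or.inr (isUpArrow_uOf T hc.2.2.1 hjn)⟩
      · have hcn : c.2 = n := by have := hc.2.2.2.1; omega
        exact ⟨hc, 1, hc.1, Or.inl (by simp [root, hcn])⟩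

theorem mem_rowSp {T : FB n} {c : Cell} :
    c ∈ RowSp T ↔ IsCell n c ∧ (c.1 = 1 ∨ c.2 ≤ lOf T c.1) := by
  constructor
  · rintro ⟨hc, j', hj', hroot | hleft⟩
    · refine ⟨hc, Or.inl ?_⟩
      have := congrArg Prod.fst hroot
      simpa [root] using this
    · exact ⟨hc, Or.inr (by rw [lOf_eq hleft]; exact hj')⟩
  · rintro ⟨hc, h1 | hl⟩
    · exact ⟨hc, n, hc.2.2.2.1, Or.inl (by simp [root, h1])⟩
    · have hi1 : 1 ≤ c.1 := hc.1
      rcases Nat.lt_or_ge c.1 2 with h2 | h2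
      · exact ⟨hc, n, hc.2.2.2.1, Or.inl (by simp [root]; omega)⟩
      · exact ⟨hc, lOf T c.1, hl, Or.inr (isLeftArrow_lOf T h2 hc.2.1)⟩

theorem isFree_iff {T : FB n} {c : Cell} :
    IsFree T c ↔ IsCell n c ∧ 1 ≤ c.2 ∧ c.2 < n ∧ uOf T c.2 < c.1 ∧
      2 ≤ c.1 ∧ c.1 ≤ n ∧ c.2 < lOf T c.1 := by
  constructor
  · rintro ⟨hc, ⟨i', hi', hup⟩, ⟨j', hj', hleft⟩⟩
    have hub := upArrow_bounds hup
    have hlb := leftArrow_bounds hleft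
    refine ⟨hc, hub.2.2.1, hub.2.2.2.1, ?_, hlb.1, hlb.2.1, ?_⟩
    · rw [uOf_eq hup]; exact hi'
    · rw [lOf_eq hleft]; exact hj'
  · rintro ⟨hc, h1, h2, h3, h4, h5, h6⟩
    exact ⟨hc, ⟨uOf T c.2, h3, isUpArrow_uOf T h1 h2⟩,
      ⟨lOf T c.1, h6, isLeftArrow_lOf T h4 h5⟩⟩

theorem lhd_iff {S T : FB n} : Lhd S T ↔
    (∀ j, 1 ≤ j → j < n → uOf T j ≤ uOf S j) ∧
    (∀ i, 2 ≤ i → i ≤ n → lOf T i ≤ lOf S i) ∧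
    (∀ c : Cell, IsFree S c → IsFree T c → c ∈ S.cells → c ∈ T.cells) := by
  constructor
  · rintro ⟨hcol, hrow, hfree⟩
    refine ⟨fun j hj hjn => ?_, fun i hi hin => ?_, hfree⟩
    · have hup := isUpArrow_uOf S hj hjn
      have hm : ((uOf S j, j) : Cell) ∈ ColSp S :=
        ⟨S.isCell_of_mem _ hup.1, uOf S j, le_refl _, Or.inr hup⟩
      have := hcol hm
      rw [mem_colSp] at this
      rcases this.2 with h | h
      · exact absurd h (by have := (upArrow_bounds hup).2.2.2.1; omega)
      · exact h
    · have hla := isLeftArrow_lOf T hi hin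
      have hm : ((i, lOf T i) : Cell) ∈ RowSp T :=
        ⟨T.isCell_of_mem _ hla.1, lOf T i, le_refl _, Or.inr hla⟩
      have := hrow hm
      rw [mem_rowSp] at this
      rcases this.2 with h | h
      · omega
      · exact h
  · rintro ⟨hu, hl, hfree⟩
    refine ⟨fun c hc => ?_, fun c hc => ?_, hfree⟩
    · rw [mem_colSp] at hc ⊢
      refine ⟨hc.1, ?_⟩
      rcases hc.2 with h | h
      · exact Or.inl h
      · have h1 : 1 ≤ c.2 := hc.1.2.2.1
        rcases Nat.lt_or_ge c.2 n with h2 | h2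
        · exact Or.inr (le_trans (hu c.2 h1 h2) h)
        · exact Or.inl (by have := hc.1.2.2.2.1; omega)
    · rw [mem_rowSp] at hc ⊢
      refine ⟨hc.1, ?_⟩
      rcases hc.2 with h | h
      · exact Or.inl h
      · rcases Nat.lt_or_ge c.1 2 with h2 | h2
        · exact Or.inl (by have := hc.1.1; omega)
        · exact Or.inr (le_trans h (hl c.1 h2 hc.1.2.1))

/-! ### Building an fb-tableau from arrow data -/

/-- The cells generated by arrow data `u`, `l` and a set `F` of free cells. -/
def cellsOf (n : ℕ) (u l : ℕ → ℕ) (F : Set Cell) : Set Cell :=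
  {root n} ∪ {c | 1 ≤ c.2 ∧ c.2 < n ∧ c.1 = u c.2} ∪
    {c | 2 ≤ c.1 ∧ c.1 ≤ n ∧ c.2 = l c.1} ∪ F

/-- Validity conditions on arrow data. -/
structure Valid (n : ℕ) (u l : ℕ → ℕ) (F : Set Cell) : Prop where
  hn : 1 ≤ n
  u_pos : ∀ j, 1 ≤ j → j < n → 1 ≤ u j
  u_le : ∀ j, 1 ≤ j → j < n → u j ≤ j + 1
  u_le_n : ∀ j, 1 ≤ j → j < n → u j ≤ n
  l_ge : ∀ i, 2 ≤ i → i ≤ n → i - 1 ≤ l i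
  l_le : ∀ i, 2 ≤ i → i ≤ n → l i ≤ n
  v3 : ∀ i, 2 ≤ i → i ≤ n → l i < n → u (l i) < i
  v4 : ∀ j, 1 ≤ j → j < n → 2 ≤ u j → j < l (u j)
  hF : ∀ c ∈ F, 1 ≤ c.2 ∧ c.2 < n ∧ u c.2 < c.1 ∧ 2 ≤ c.1 ∧ c.1 ≤ n ∧
    c.2 < l c.1 ∧ c.1 - 1 ≤ c.2
  border : ∀ i, 2 ≤ i → i ≤ n → u (i - 1) = i ∨ l i = i - 1 ∨ ((i, i - 1) : Cell) ∈ F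

namespace Valid

variable {u l : ℕ → ℕ} {F : Set Cell} (hV : Valid n u l F)

/-- The fb-tableau built from valid arrow data. -/
def toFB (hV : Valid n u l F) : FB n where
  cells := cellsOf n u l F
  isCell_of_mem := by
    rintro c (((hc | hc) | hc) | hc)
    · rcases hc with rfl
      have := hV.hn
      refine ⟨?_, ?_, ?_, ?_, Or.inl ?_⟩ <;> simp [root] <;> omega
    · obtain ⟨h1, h2, h3⟩ := hc
      have := hV.u_pos c.2 h1 h2
      have := hV.u_le c.2 h1 h2
      have := hV.u_le_n c.2 h1 h2
      exact ⟨by omega, by omega, h1, by omega, by omega⟩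
    · obtain ⟨h1, h2, h3⟩ := hc
      have := hV.l_ge c.1 h1 h2
      have := hV.l_le c.1 h1 h2
      exact ⟨by omega, h2, by omega, by omega, by omega⟩
    · obtain ⟨h1, h2, h3, h4, h5, h6, h7⟩ := hV.hF c hc
      exact ⟨by omega, h5, h1, by omega, by omega⟩
  root_mem := Or.inl (Or.inl (Or.inl rfl))
  border_mem := by
    rintro ⟨i, j⟩ ⟨h1, h2, h3⟩
    simp only at h1 h2 h3
    subst h3
    rcases hV.border i h1 h2 with h | h | h
    · exact Or.inl (Or.inl (Or.inr ⟨by omega, by omega, h.symm⟩))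
    · exact Or.inl (Or.inr ⟨h1, h2, h.symm⟩)
    · exact Or.inr h
  supported := by
    rintro c (((hc | hc) | hc) | hc) hroot
    · exact absurd hc hroot
    · obtain ⟨h1, h2, h3⟩ := hc
      rcases Nat.lt_or_ge (u c.2) 2 with h4 | h4
      · -- row of the up-arrow is 1 : the root is strictly to its left
        refine Or.inl ⟨n, by omega, ?_⟩
        have hp := hV.u_pos c.2 h1 h2
        have : c.1 = 1 := by omega
        rw [this]
        exact Or.inl (Or.inl (Or.inl (by simp [root])))
      · refine Or.inl ⟨l (u c.2), hV.v4 c.2 h1 h2 h4, ?_⟩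
        have hun : u c.2 ≤ n := hV.u_le_n c.2 h1 h2
        exact Or.inl (Or.inr ⟨by omega, by omega, by rw [h3]⟩)
    · obtain ⟨h1, h2, h3⟩ := hc
      rcases Nat.lt_or_ge (l c.1) n with h4 | h4
      · refine Or.inr ⟨u (l c.1), hV.v3 c.1 h1 h2 h4, ?_⟩
        have hlg := hV.l_ge c.1 h1 h2
        exact Or.inl (Or.inl (Or.inr ⟨by omega, by rw [h3]; exact h4, by rw [h3]⟩))
      · have hln : l c.1 = n := le_antisymm (hV.l_le c.1 h1 h2) h4
        refine Or.inr ⟨1, by omega, ?_⟩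
        rw [h3, hln]
        exact Or.inl (Or.inl (Or.inl (by simp [root])))
    · obtain ⟨h1, h2, h3, h4, h5, h6, h7⟩ := hV.hF c hc
      exact Or.inr ⟨u c.2, h3, Or.inl (Or.inl (Or.inr ⟨h1, h2, rfl⟩))⟩

theorem toFB_isUpArrow {i j : ℕ} :
    IsUpArrow hV.toFB (i, j) ↔ 1 ≤ j ∧ j < n ∧ i = u j := by
  constructor
  · rintro ⟨hm, hnr, htop⟩
    rcases hm with (((hc | hc) | hc) | hc)
    · exact absurd hc hnr
    · exact ⟨hc.1, hc.2.1, hc.2.2⟩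
    · obtain ⟨h1, h2, h3⟩ := hc
      simp only at h1 h2 h3
      subst h3
      exfalso
      rcases Nat.lt_or_ge (l i) n with h4 | h4
      · have hv3 := hV.v3 i h1 h2 h4
        have hlg := hV.l_ge i h1 h2
        exact htop (u (l i)) hv3 (Or.inl (Or.inl (Or.inr ⟨by omega, h4, rfl⟩)))
      · have hln : l i = n := le_antisymm (hV.l_le i h1 h2) h4
        refine htop 1 (by omega) ?_
        rw [hln]
        exact Or.inl (Or.inl (Or.inl (by simp [root])))
    · obtain ⟨h1, h2, h3, h4, h5, h6, h7⟩ := hV.hF _ hc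
      exact absurd (Or.inl (Or.inl (Or.inr ⟨h1, h2, rfl⟩))) (htop (u j) h3)
  · rintro ⟨h1, h2, rfl⟩
    refine ⟨Or.inl (Or.inl (Or.inr ⟨h1, h2, rfl⟩)), ?_, ?_⟩
    · intro hr
      have := congrArg Prod.snd hr
      simp only [root] at this
      omega
    · intro i' hi' hm
      rcases hm with (((hc | hc) | hc) | hc)
      · have := congrArg Prod.snd hc
        simp only [root] at this
        omega
      · have : i' = u j := hc.2.2
        omega
      · obtain ⟨h1', h2', h3'⟩ := hc
        simp only at h1' h2' h3'
        have hv3 := hV.v3 i' h1' h2' (by omega)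
        rw [← h3'] at hv3
        omega
      · obtain ⟨f1, f2, f3, f4, f5, f6, f7⟩ := hV.hF _ hc
        simp only at f3
        omega

theorem toFB_isLeftArrow {i j : ℕ} :
    IsLeftArrow hV.toFB (i, j) ↔ 2 ≤ i ∧ i ≤ n ∧ j = l i := by
  constructor
  · rintro ⟨hm, hnr, hmax⟩
    have hi2 : 2 ≤ i := (leftArrow_bounds ⟨hm, hnr, hmax⟩).1
    rcases hm with (((hc | hc) | hc) | hc)
    · exact absurd hc hnr
    · obtain ⟨h1, h2, h3⟩ := hc
      simp only at h1 h2 h3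
      exfalso
      have hv4 := hV.v4 j h1 h2 (by omega)
      rw [← h3] at hv4
      have hun : u j ≤ n := hV.u_le_n j h1 h2
      refine hmax (l i) (by rw [h3] at hv4 ⊢; exact hv4) ?_
      exact Or.inl (Or.inr ⟨hi2, by omega, rfl⟩)
    · exact ⟨hc.1, hc.2.1, hc.2.2⟩
    · obtain ⟨f1, f2, f3, f4, f5, f6, f7⟩ := hV.hF _ hc
      simp only at f6
      exact absurd (Or.inl (Or.inr ⟨f4, f5, rfl⟩)) (hmax (l i) f6)
  · rintro ⟨h1, h2, rfl⟩
    refine ⟨Or.inl (Or.inr ⟨h1, h2, rfl⟩), ?_, ?_⟩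
    · intro hr
      have := congrArg Prod.fst hr
      simp only [root] at this
      omega
    · intro j' hj' hm
      rcases hm with (((hc | hc) | hc) | hc)
      · have h1' := congrArg Prod.fst hc
        simp only [root] at h1'
        omega
      · obtain ⟨h1', h2', h3'⟩ := hc
        simp only at h1' h2' h3'
        have hv4 := hV.v4 j' h1' h2' (by omega)
        rw [← h3'] at hv4
        omega
      · have : j' = l i := hc.2.2
        omega
      · obtain ⟨f1, f2, f3, f4, f5, f6, f7⟩ := hV.hF _ hc
        simp only at f6
        omega

theorem toFB_uOf {j : ℕ} (hj : 1 ≤ j) (hjn : j < n) : uOf hV.toFB j = u j :=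
  uOf_eq (hV.toFB_isUpArrow.mpr ⟨hj, hjn, rfl⟩)

theorem toFB_lOf {i : ℕ} (hi : 2 ≤ i) (hin : i ≤ n) : lOf hV.toFB i = l i :=
  lOf_eq (hV.toFB_isLeftArrow.mpr ⟨hi, hin, rfl⟩)

theorem toFB_isFree {c : Cell} :
    IsFree hV.toFB c ↔ IsCell n c ∧ 1 ≤ c.2 ∧ c.2 < n ∧ u c.2 < c.1 ∧
      2 ≤ c.1 ∧ c.1 ≤ n ∧ c.2 < l c.1 := by
  rw [isFree_iff]
  constructor
  · rintro ⟨hc, h1, h2, h3, h4, h5, h6⟩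
    rw [hV.toFB_uOf h1 h2] at h3
    rw [hV.toFB_lOf h4 h5] at h6
    exact ⟨hc, h1, h2, h3, h4, h5, h6⟩
  · rintro ⟨hc, h1, h2, h3, h4, h5, h6⟩
    rw [← hV.toFB_uOf h1 h2] at h3
    rw [← hV.toFB_lOf h4 h5] at h6
    exact ⟨hc, h1, h2, h3, h4, h5, h6⟩

theorem toFB_free_not_arrow {c : Cell} (hf : IsFree hV.toFB c) :
    c ∈ hV.toFB.cells ↔ c ∈ F := by
  rw [hV.toFB_isFree] at hf
  obtain ⟨hc, h1, h2, h3, h4, h5, h6⟩ := hf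
  constructor
  · rintro (((hc' | hc') | hc') | hc')
    · exfalso
      have := congrArg Prod.fst hc'
      simp only [root] at this
      omega
    · exfalso; have := hc'.2.2; omega
    · exfalso; have := hc'.2.2; omega
    · exact hc'
  · exact fun h => Or.inr h

end Valid

/-! ### The meet construction -/

section Meet

variable (M N : FB n)

/-- Column data of the meet: the lower of the two up-arrows. -/
noncomputable def meetU (j : ℕ) : ℕ := max (uOf M j) (uOf N j)

theorem meetL_ex (i : ℕ) :
    ∃ j, max (lOf M i) (lOf N i) ≤ j ∧ (n ≤ j ∨ meetU M N j ≤ i) :=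
  ⟨max n (max (lOf M i) (lOf N i)), le_max_right _ _, Or.inl (le_max_left _ _)⟩

/-- Row data of the meet: leftmost of the two left-arrows, pushed further left
(to larger column indices) until it is not strictly above the meet's up-arrow. -/
noncomputable def meetL (i : ℕ) : ℕ := Nat.find (meetL_ex M N i)

theorem meetL_ge (i : ℕ) : max (lOf M i) (lOf N i) ≤ meetL M N i :=
  (Nat.find_spec (meetL_ex M N i)).1

theorem meetL_cond (i : ℕ) : n ≤ meetL M N i ∨ meetU M N (meetL M N i) ≤ i :=
  (Nat.find_spec (meetL_ex M N i)).2

theorem meetL_le {i j : ℕ} (h1 : max (lOf M i) (lOf N i) ≤ j)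
    (h2 : n ≤ j ∨ meetU M N j ≤ i) : meetL M N i ≤ j :=
  Nat.find_le ⟨h1, h2⟩

theorem meetL_min {i j : ℕ} (h : j < meetL M N i) :
    ¬(max (lOf M i) (lOf N i) ≤ j ∧ (n ≤ j ∨ meetU M N j ≤ i)) :=
  Nat.find_min (meetL_ex M N i) h

/-- Free cells of the meet. -/
noncomputable def meetF : Set Cell :=
  {c | IsCell n c ∧ 1 ≤ c.2 ∧ c.2 < n ∧ meetU M N c.2 < c.1 ∧ 2 ≤ c.1 ∧
    c.1 ≤ n ∧ c.2 < meetL M N c.1 ∧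
    (c ∈ M.cells ∨ ¬ IsFree M c) ∧ (c ∈ N.cells ∨ ¬ IsFree N c)}

variable (hn : 1 ≤ n)

include hn in
theorem meet_valid : Valid n (meetU M N) (meetL M N) (meetF M N) := by
  refine ⟨hn, ?_, ?_, ?_, ?_, ?_, ?_, ?_, ?_, ?_⟩
  · intro j h1 h2
    exact le_trans (uOf_bounds M h1 h2).1 (le_max_left _ _)
  · intro j h1 h2
    exact max_le (uOf_bounds M h1 h2).2.2 (uOf_bounds N h1 h2).2.2
  · intro j h1 h2
    exact max_le (uOf_bounds M h1 h2).2.1 (uOf_bounds N h1 h2).2.1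
  · intro i h1 h2
    exact le_trans (le_trans (lOf_bounds M h1 h2).1 (le_max_left _ _)) (meetL_ge M N i)
  · intro i h1 h2
    exact meetL_le M N (max_le (lOf_bounds M h1 h2).2 (lOf_bounds N h1 h2).2)
      (Or.inl (le_refl n))
  · -- v3
    intro i h1 h2 h3
    rcases meetL_cond M N i with h | h
    · omega
    · rcases Nat.lt_or_ge (meetU M N (meetL M N i)) i with h' | h'
      · exact h'
      · exfalso
        have heq : meetU M N (meetL M N i) = i := by omega
        have hj1 : 1 ≤ meetL M N i := by
          have := le_trans (lOf_bounds M h1 h2).1 (le_trans (le_max_left _ _) (meetL_ge M N i))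
          omega
        have hmax : uOf M (meetL M N i) = i ∨ uOf N (meetL M N i) = i := by
          rcases max_choice (uOf M (meetL M N i)) (uOf N (meetL M N i)) with hh | hh <;>
            rw [meetU, hh] at heq
          · exact Or.inl heq
          · exact Or.inr heq
        rcases hmax with hh | hh
        · have h9 := lt_lOf_uOf M hj1 h3 (by omega)
          rw [hh] at h9
          have h10 := le_trans (le_max_left (lOf M i) (lOf N i)) (meetL_ge M N i)
          omega
        · have h9 := lt_lOf_uOf N hj1 h3 (by omega)
          rw [hh] at h9
          have h10 := le_trans (le_max_right (lOf M i) (lOf N i)) (meetL_ge M N i)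
          omega
  · -- v4
    intro j h1 h2 h3
    rcases max_choice (uOf M j) (uOf N j) with hh | hh <;> rw [meetU, hh] <;>
      rw [meetU, hh] at h3
    · exact lt_of_lt_of_le (lt_lOf_uOf M h1 h2 h3)
        (le_trans (le_max_left _ _) (meetL_ge M N _))
    · exact lt_of_lt_of_le (lt_lOf_uOf N h1 h2 h3)
        (le_trans (le_max_right _ _) (meetL_ge M N _))
  · -- free cells
    rintro c ⟨hc, h1, h2, h3, h4, h5, h6, h7, h8⟩
    refine ⟨h1, h2, h3, h4, h5, h6, ?_⟩
    rcases hc.2.2.2.2 with h | h <;> omega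
  · -- borders
    intro i h1 h2
    by_cases hu : meetU M N (i - 1) = i
    · exact Or.inl hu
    by_cases hl : meetL M N i = i - 1
    · exact Or.inr (Or.inl hl)
    refine Or.inr (Or.inr ?_)
    have hj1 : 1 ≤ i - 1 := by omega
    have hj2 : i - 1 < n := by omega
    have hub : meetU M N (i - 1) ≤ i :=
      max_le (by have := (uOf_bounds M hj1 hj2).2.2; omega)
        (by have := (uOf_bounds N hj1 hj2).2.2; omega)
    have hlb : i - 1 ≤ meetL M N i :=
      le_trans (le_trans (lOf_bounds M h1 h2).1 (le_max_left _ _)) (meetL_ge M N i)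
    have hMb := M.border_mem (i, i - 1) ⟨h1, h2, rfl⟩
    have hNb := N.border_mem (i, i - 1) ⟨h1, h2, rfl⟩
    simp only [meetF, Set.mem_setOf_eq, IsCell]
    exact ⟨⟨by omega, by omega, by omega, by omega, by omega⟩, by omega, by omega,
      by omega, h1, h2, by omega, Or.inl hMb, Or.inl hNb⟩

/-- The meet of two fb-tableaux. -/
noncomputable def meetFB : FB n := (meet_valid M N hn).toFB

theorem meetFB_uOf {j : ℕ} (h1 : 1 ≤ j) (h2 : j < n) :
    uOf (meetFB M N hn) j = meetU M N j :=
  (meet_valid M N hn).toFB_uOf h1 h2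

theorem meetFB_lOf {i : ℕ} (h1 : 2 ≤ i) (h2 : i ≤ n) :
    lOf (meetFB M N hn) i = meetL M N i :=
  (meet_valid M N hn).toFB_lOf h1 h2

theorem meet_lhd_left : Lhd (meetFB M N hn) M := by
  rw [lhd_iff]
  refine ⟨fun j hj hjn => ?_, fun i hi hin => ?_, fun c hcm hcM hmem => ?_⟩
  · rw [meetFB_uOf M N hn hj hjn]
    exact le_max_left _ _
  · rw [meetFB_lOf M N hn hi hin]
    exact le_trans (le_max_left _ _) (meetL_ge M N i)
  · have := ((meet_valid M N hn).toFB_free_not_arrow hcm).mp hmem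
    rcases this.2.2.2.2.2.2.2.1 with h | h
    · exact h
    · exact absurd hcM h

theorem meet_lhd_right : Lhd (meetFB M N hn) N := by
  rw [lhd_iff]
  refine ⟨fun j hj hjn => ?_, fun i hi hin => ?_, fun c hcm hcN hmem => ?_⟩
  · rw [meetFB_uOf M N hn hj hjn]
    exact le_max_right _ _
  · rw [meetFB_lOf M N hn hi hin]
    exact le_trans (le_max_right _ _) (meetL_ge M N i)
  · have := ((meet_valid M N hn).toFB_free_not_arrow hcm).mp hmem
    rcases this.2.2.2.2.2.2.2.2 with h | h
    · exact h
    · exact absurd hcN h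

theorem meet_lhd_greatest (t : FB n) (hM : Lhd t M) (hN : Lhd t N) :
    Lhd t (meetFB M N hn) := by
  rw [lhd_iff] at hM hN ⊢
  refine ⟨fun j hj hjn => ?_, fun i hi hin => ?_, fun c hct hcm hmem => ?_⟩
  · rw [meetFB_uOf M N hn hj hjn]
    exact max_le (hM.1 j hj hjn) (hN.1 j hj hjn)
  · rw [meetFB_lOf M N hn hi hin]
    refine meetL_le M N (max_le (hM.2.1 i hi hin) (hN.2.1 i hi hin)) ?_
    rcases Nat.lt_or_ge (lOf t i) n with h | h
    · refine Or.inr ?_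
      have hj1 : 1 ≤ lOf t i := by
        have := (lOf_bounds t hi hin).1
        omega
      exact le_trans (max_le (hM.1 _ hj1 h) (hN.1 _ hj1 h)) (uOf_lOf_lt t hi hin h).le
    · exact Or.inl h
  · refine Or.inr ?_
    have hfree := ((meet_valid M N hn).toFB_isFree).mp hcm
    obtain ⟨hc, h1, h2, h3, h4, h5, h6⟩ := hfree
    refine ⟨hc, h1, h2, h3, h4, h5, h6, ?_, ?_⟩
    · by_cases hM' : IsFree M c
      · exact Or.inl (hM.2.2 c hct hM' hmem)
      · exact Or.inr hM'
    · by_cases hN' : IsFree N c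
      · exact Or.inl (hN.2.2 c hct hN' hmem)
      · exact Or.inr hN'

theorem meet_isMeet : IsMeet M N (meetFB M N hn) :=
  ⟨meet_lhd_left M N hn, meet_lhd_right M N hn, meet_lhd_greatest M N hn⟩

end Meet

/-! ### The join construction -/

section Join

variable (M N : FB n)

/-- Row data of the join: the rightmost (smaller column) of the two left-arrows. -/
noncomputable def joinL (i : ℕ) : ℕ := min (lOf M i) (lOf N i)

/-- Column data of the join: the higher of the two up-arrows, pushed further up
until its row's left-arrow lies strictly to its left (or it reaches row `1`). -/
noncomputable def joinU (j : ℕ) : ℕ :=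
  Nat.findGreatest (fun i => 1 ≤ i ∧ (i = 1 ∨ j < joinL M N i))
    (min (uOf M j) (uOf N j))

/-- Free cells of the join. -/
noncomputable def joinF : Set Cell :=
  {c | IsCell n c ∧ 1 ≤ c.2 ∧ c.2 < n ∧ joinU M N c.2 < c.1 ∧ 2 ≤ c.1 ∧
    c.1 ≤ n ∧ c.2 < joinL M N c.1 ∧
    ((c ∈ M.cells ∧ IsFree M c) ∨ (c ∈ N.cells ∧ IsFree N c))}

theorem joinU_le (j : ℕ) : joinU M N j ≤ min (uOf M j) (uOf N j) :=
  Nat.findGreatest_le _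

theorem joinU_pos {j : ℕ} (h1 : 1 ≤ j) (h2 : j < n) : 1 ≤ joinU M N j := by
  refine Nat.le_findGreatest ?_ ⟨le_refl 1, Or.inl rfl⟩
  have := (uOf_bounds M h1 h2).1
  have := (uOf_bounds N h1 h2).1
  omega

theorem joinU_spec {j : ℕ} (h1 : 1 ≤ j) (h2 : j < n) :
    joinU M N j = 1 ∨ j < joinL M N (joinU M N j) := by
  have hb : 1 ≤ min (uOf M j) (uOf N j) := by
    have := (uOf_bounds M h1 h2).1
    have := (uOf_bounds N h1 h2).1
    omega
  have h := Nat.findGreatest_spec (P := fun i => 1 ≤ i ∧ (i = 1 ∨ j < joinL M N i))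
    hb ⟨le_refl 1, Or.inl rfl⟩
  exact h.2

theorem le_joinU {j i : ℕ} (hle : i ≤ min (uOf M j) (uOf N j)) (h1 : 1 ≤ i)
    (h : i = 1 ∨ j < joinL M N i) : i ≤ joinU M N j :=
  Nat.le_findGreatest hle ⟨h1, h⟩

variable (hn : 1 ≤ n)

include hn in
theorem join_valid : Valid n (joinU M N) (joinL M N) (joinF M N) := by
  refine ⟨hn, ?_, ?_, ?_, ?_, ?_, ?_, ?_, ?_, ?_⟩
  · intro j h1 h2
    exact joinU_pos M N h1 h2
  · intro j h1 h2
    have := joinU_le M N j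
    have := (uOf_bounds M h1 h2).2.2
    omega
  · intro j h1 h2
    have := joinU_le M N j
    have := (uOf_bounds M h1 h2).2.1
    omega
  · intro i h1 h2
    exact le_min (lOf_bounds M h1 h2).1 (lOf_bounds N h1 h2).1
  · intro i h1 h2
    exact le_trans (min_le_left _ _) (lOf_bounds M h1 h2).2
  · -- v3
    intro i h1 h2 h3
    rcases min_choice (lOf M i) (lOf N i) with hh | hh
    · have h4 : lOf M i < n := by rw [joinL] at h3; omega
      have := uOf_lOf_lt M h1 h2 h4
      have h5 := joinU_le M N (lOf M i)
      rw [joinL, hh]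
      omega
    · have h4 : lOf N i < n := by rw [joinL] at h3; omega
      have := uOf_lOf_lt N h1 h2 h4
      have h5 := joinU_le M N (lOf N i)
      rw [joinL, hh]
      omega
  · -- v4
    intro j h1 h2 h3
    rcases joinU_spec M N h1 h2 with h | h
    · omega
    · exact h
  · -- free cells
    rintro c ⟨hc, h1, h2, h3, h4, h5, h6, h7⟩
    refine ⟨h1, h2, h3, h4, h5, h6, ?_⟩
    rcases hc.2.2.2.2 with h | h <;> omega
  · -- borders
    intro i h1 h2
    by_cases hu : joinU M N (i - 1) = i
    · exact Or.inl hu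
    by_cases hl : joinL M N i = i - 1
    · exact Or.inr (Or.inl hl)
    refine Or.inr (Or.inr ?_)
    have hj1 : 1 ≤ i - 1 := by omega
    have hj2 : i - 1 < n := by omega
    have hMb := M.border_mem (i, i - 1) ⟨h1, h2, rfl⟩
    have hNb := N.border_mem (i, i - 1) ⟨h1, h2, rfl⟩
    have hlM : i - 1 ≤ lOf M i := (lOf_bounds M h1 h2).1
    have hlN : i - 1 ≤ lOf N i := (lOf_bounds N h1 h2).1
    have hjlM : joinL M N i ≤ lOf M i := min_le_left _ _
    have hjlN : joinL M N i ≤ lOf N i := min_le_right _ _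
    have hlj : i - 1 < joinL M N i := by
      have : i - 1 ≤ joinL M N i := le_min hlM hlN
      omega
    have huM : uOf M (i - 1) ≤ i := by have := (uOf_bounds M hj1 hj2).2.2; omega
    have huN : uOf N (i - 1) ≤ i := by have := (uOf_bounds N hj1 hj2).2.2; omega
    have huj : joinU M N (i - 1) < i := by
      have hle := joinU_le M N (i - 1)
      rcases Nat.lt_or_ge (joinU M N (i - 1)) i with h | h
      · exact h
      · exfalso
        have hmin : min (uOf M (i - 1)) (uOf N (i - 1)) = i := by omega
        have : i ≤ joinU M N (i - 1) :=
          le_joinU M N (by omega) (by omega) (Or.inr (by omega))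
        omega
    have hfree : IsFree M (i, i - 1) ∨ IsFree N (i, i - 1) := by
      rcases Nat.lt_or_ge (uOf M (i - 1)) i with h | h
      · refine Or.inl (isFree_iff.mpr ?_)
        simp only [IsCell]
        refine ⟨⟨?_, ?_, ?_, ?_, ?_⟩, ?_, ?_, ?_, ?_, ?_, ?_⟩ <;> omega
      · have hM' : uOf M (i - 1) = i := by omega
        have hN' : uOf N (i - 1) < i := by
          rcases Nat.lt_or_ge (uOf N (i - 1)) i with h' | h'
          · exact h'
          · exfalso
            have hmin : min (uOf M (i - 1)) (uOf N (i - 1)) = i := by omega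
            have : i ≤ joinU M N (i - 1) :=
              le_joinU M N (by omega) (by omega) (Or.inr (by omega))
            omega
        refine Or.inr (isFree_iff.mpr ?_)
        simp only [IsCell]
        refine ⟨⟨?_, ?_, ?_, ?_, ?_⟩, ?_, ?_, ?_, ?_, ?_, ?_⟩ <;> omega
    simp only [joinF, Set.mem_setOf_eq, IsCell]
    refine ⟨⟨by omega, by omega, by omega, by omega, by omega⟩, by omega, by omega,
      by omega, h1, h2, by omega, ?_⟩
    rcases hfree with h | h
    · exact Or.inl ⟨hMb, h⟩
    · exact Or.inr ⟨hNb, h⟩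

/-- The join of two fb-tableaux. -/
noncomputable def joinFB : FB n := (join_valid M N hn).toFB

theorem joinFB_uOf {j : ℕ} (h1 : 1 ≤ j) (h2 : j < n) :
    uOf (joinFB M N hn) j = joinU M N j :=
  (join_valid M N hn).toFB_uOf h1 h2

theorem joinFB_lOf {i : ℕ} (h1 : 2 ≤ i) (h2 : i ≤ n) :
    lOf (joinFB M N hn) i = joinL M N i :=
  (join_valid M N hn).toFB_lOf h1 h2

theorem join_lhd_left : Lhd M (joinFB M N hn) := by
  rw [lhd_iff]
  refine ⟨fun j hj hjn => ?_, fun i hi hin => ?_, fun c hcM hcj hmem => ?_⟩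
  · rw [joinFB_uOf M N hn hj hjn]
    have := joinU_le M N j
    omega
  · rw [joinFB_lOf M N hn hi hin]
    exact min_le_left _ _
  · refine Or.inr ?_
    have hfree := ((join_valid M N hn).toFB_isFree).mp hcj
    obtain ⟨hc, h1, h2, h3, h4, h5, h6⟩ := hfree
    exact ⟨hc, h1, h2, h3, h4, h5, h6, Or.inl ⟨hmem, hcM⟩⟩

theorem join_lhd_right : Lhd N (joinFB M N hn) := by
  rw [lhd_iff]
  refine ⟨fun j hj hjn => ?_, fun i hi hin => ?_, fun c hcN hcj hmem => ?_⟩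
  · rw [joinFB_uOf M N hn hj hjn]
    have := joinU_le M N j
    omega
  · rw [joinFB_lOf M N hn hi hin]
    exact min_le_right _ _
  · refine Or.inr ?_
    have hfree := ((join_valid M N hn).toFB_isFree).mp hcj
    obtain ⟨hc, h1, h2, h3, h4, h5, h6⟩ := hfree
    exact ⟨hc, h1, h2, h3, h4, h5, h6, Or.inr ⟨hmem, hcN⟩⟩

theorem join_lhd_least (t : FB n) (hM : Lhd M t) (hN : Lhd N t) :
    Lhd (joinFB M N hn) t := by
  rw [lhd_iff] at hM hN ⊢
  refine ⟨fun j hj hjn => ?_, fun i hi hin => ?_, fun c hcj hct hmem => ?_⟩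
  · rw [joinFB_uOf M N hn hj hjn]
    refine le_joinU M N (le_min (hM.1 j hj hjn) (hN.1 j hj hjn)) ?_ ?_
    · exact (uOf_bounds t hj hjn).1
    · rcases Nat.lt_or_ge (uOf t j) 2 with h | h
      · have := (uOf_bounds t hj hjn).1
        exact Or.inl (by omega)
      · refine Or.inr ?_
        have h4 := lt_lOf_uOf t hj hjn h
        have hb := (uOf_bounds t hj hjn).2.1
        have hM' := hM.2.1 (uOf t j) h hb
        have hN' := hN.2.1 (uOf t j) h hb
        have : joinL M N (uOf t j) = min (lOf M (uOf t j)) (lOf N (uOf t j)) := rfl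
        omega
  · rw [joinFB_lOf M N hn hi hin]
    exact le_min (hM.2.1 i hi hin) (hN.2.1 i hi hin)
  · have hmem' := ((join_valid M N hn).toFB_free_not_arrow hcj).mp hmem
    rcases hmem'.2.2.2.2.2.2.2 with ⟨hmM, hfM⟩ | ⟨hmN, hfN⟩
    · exact hM.2.2 c hfM hct hmM
    · exact hN.2.2 c hfN hct hmN

theorem join_isJoin : IsJoin M N (joinFB M N hn) :=
  ⟨join_lhd_left M N hn, join_lhd_right M N hn, join_lhd_least M N hn⟩

end Join

/-! ### The meet satisfies the description, and the description is unique -/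

section Spec

variable (M N : FB n) (hn : 1 ≤ n)

theorem meetFB_pointedUp {i j' : ℕ} :
    PointedUp (meetFB M N hn) (i, j') ↔ 1 ≤ j' ∧ j' < n ∧ i < meetU M N j' := by
  simp only [PointedUp]
  constructor
  · rintro ⟨i'', hi'', hup⟩
    have hi2 : i < i'' := hi''
    have h := ((meet_valid M N hn).toFB_isUpArrow).mp hup
    refine ⟨h.1, h.2.1, ?_⟩
    have := h.2.2
    omega
  · rintro ⟨h1, h2, h3⟩
    exact ⟨meetU M N j', h3, ((meet_valid M N hn).toFB_isUpArrow).mpr ⟨h1, h2, rfl⟩⟩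

theorem meet_spec : MeetSpec n M N (meetFB M N hn) := by
  refine ⟨(meetFB M N hn).root_mem, ?_, ?_, ?_, ?_⟩
  · -- (b)
    intro j a b ha hb
    have hbnd := upArrow_bounds ha
    have haM := uOf_eq ha
    have hbN := uOf_eq hb
    refine ((meet_valid M N hn).toFB_isUpArrow).mpr ⟨hbnd.2.2.1, hbnd.2.2.2.1, ?_⟩
    rw [meetU, haM, hbN]
  · -- (c)
    intro i jM jN hM hN
    have hbM := leftArrow_bounds hM
    have hlM := lOf_eq hM
    have hlN := lOf_eq hN
    have hm0l : max jM jN = max (lOf M i) (lOf N i) := by rw [hlM, hlN]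
    have hi2 : 2 ≤ i := hbM.1
    have hin : i ≤ n := hbM.2.1
    have h1m0 : 1 ≤ max jM jN := by have := hbM.2.2.1; omega
    constructor
    · intro hnp
      rw [meetFB_pointedUp] at hnp
      have hcond : n ≤ max jM jN ∨ meetU M N (max jM jN) ≤ i := by
        by_cases h : max jM jN < n
        · refine Or.inr ?_
          by_contra h'
          exact hnp ⟨h1m0, h, by omega⟩
        · exact Or.inl (by omega)
      have heq : meetL M N i = max jM jN :=
        le_antisymm (meetL_le M N (by rw [← hm0l]) hcond)
          (by rw [hm0l]; exact meetL_ge M N i)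
      exact ((meet_valid M N hn).toFB_isLeftArrow).mpr ⟨hi2, hin, heq.symm⟩
    · intro hp
      rw [meetFB_pointedUp] at hp
      obtain ⟨_, hm0n, hiu⟩ := hp
      have hge : max jM jN ≤ meetL M N i := by rw [hm0l]; exact meetL_ge M N i
      have hlt : max jM jN < meetL M N i := by
        rcases Nat.lt_or_ge (max jM jN) (meetL M N i) with h | h
        · exact h
        · exfalso
          have heq : meetL M N i = max jM jN := by omega
          rcases meetL_cond M N i with h' | h' <;> rw [heq] at h' <;> omega
      refine ⟨meetL M N i, hlt, ?_, ?_, ?_⟩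
      · exact ((meet_valid M N hn).toFB_isLeftArrow).mpr ⟨hi2, hin, rfl⟩
      · rw [meetFB_pointedUp]
        rintro ⟨_, h2', h3'⟩
        rcases meetL_cond M N i with h' | h' <;> omega
      · intro j'' hj1 hj2
        rw [meetFB_pointedUp]
        have hnc := meetL_min M N hj2
        rw [← hm0l] at hnc
        have hcond : ¬(n ≤ j'' ∨ meetU M N j'' ≤ i) := fun h => hnc ⟨by omega, h⟩
        push_neg at hcond
        exact ⟨by omega, hcond.1, by omega⟩
  · -- (d)
    intro c hf
    have hf' := ((meet_valid M N hn).toFB_isFree).mp hf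
    have hiff := (meet_valid M N hn).toFB_free_not_arrow hf
    constructor
    · intro hmem
      have hm := hiff.mp hmem
      exact ⟨hm.2.2.2.2.2.2.2.1, hm.2.2.2.2.2.2.2.2⟩
    · rintro ⟨h8, h9⟩
      exact hiff.mpr ⟨hf'.1, hf'.2.1, hf'.2.2.1, hf'.2.2.2.1, hf'.2.2.2.2.1,
        hf'.2.2.2.2.2.1, hf'.2.2.2.2.2.2, h8, h9⟩
  · -- (e)
    rintro c hc
    rcases hc with (((h | h) | h) | h)
    · exact Or.inl h
    · refine Or.inr (Or.inr (Or.inl ?_))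
      have : IsUpArrow (meetFB M N hn) (c.1, c.2) :=
        ((meet_valid M N hn).toFB_isUpArrow).mpr ⟨h.1, h.2.1, h.2.2⟩
      exact this
    · refine Or.inr (Or.inl ?_)
      have : IsLeftArrow (meetFB M N hn) (c.1, c.2) :=
        ((meet_valid M N hn).toFB_isLeftArrow).mpr ⟨h.1, h.2.1, h.2.2⟩
      exact this
    · refine Or.inr (Or.inr (Or.inr ?_))
      exact ((meet_valid M N hn).toFB_isFree).mpr
        ⟨h.1, h.2.1, h.2.2.1, h.2.2.2.1, h.2.2.2.2.1, h.2.2.2.2.2.1, h.2.2.2.2.2.2.1⟩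

variable {M N}

theorem spec_uOf {L : FB n} (h : MeetSpec n M N L) {j : ℕ} (h1 : 1 ≤ j) (h2 : j < n) :
    uOf L j = meetU M N j := by
  have hM := isUpArrow_uOf M h1 h2
  have hN := isUpArrow_uOf N h1 h2
  exact uOf_eq (h.2.1 j _ _ hM hN)

theorem spec_isUpArrow {L : FB n} (h : MeetSpec n M N L) {i j : ℕ} :
    IsUpArrow L (i, j) ↔ 1 ≤ j ∧ j < n ∧ i = meetU M N j := by
  constructor
  · intro hu
    have hb := upArrow_bounds hu
    refine ⟨hb.2.2.1, hb.2.2.2.1, ?_⟩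
    rw [← uOf_eq hu, spec_uOf h hb.2.2.1 hb.2.2.2.1]
  · rintro ⟨h1, h2, rfl⟩
    have heq := spec_uOf h h1 h2
    rw [← heq]
    exact isUpArrow_uOf L h1 h2

theorem spec_pointedUp {L : FB n} (h : MeetSpec n M N L) {i j : ℕ} :
    PointedUp L (i, j) ↔ 1 ≤ j ∧ j < n ∧ i < meetU M N j := by
  simp only [PointedUp]
  constructor
  · rintro ⟨i'', hi'', hup⟩
    have hi2 : i < i'' := hi''
    have h' := (spec_isUpArrow h).mp hup
    refine ⟨h'.1, h'.2.1, by omega⟩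
  · rintro ⟨h1, h2, h3⟩
    exact ⟨meetU M N j, h3, (spec_isUpArrow h).mpr ⟨h1, h2, rfl⟩⟩

theorem spec_lOf_eq {L1 L2 : FB n} (h1 : MeetSpec n M N L1) (h2 : MeetSpec n M N L2)
    {i : ℕ} (hi : 2 ≤ i) (hin : i ≤ n) : lOf L1 i = lOf L2 i := by
  have hM := isLeftArrow_lOf M hi hin
  have hN := isLeftArrow_lOf N hi hin
  have c1 := h1.2.2.1 i _ _ hM hN
  have c2 := h2.2.2.1 i _ _ hM hN
  by_cases hp : PointedUp L1 (i, max (lOf M i) (lOf N i))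
  · have hp2 : PointedUp L2 (i, max (lOf M i) (lOf N i)) :=
      (spec_pointedUp h2).mpr ((spec_pointedUp h1).mp hp)
    obtain ⟨j1, hj1, hl1, hnp1, hbet1⟩ := c1.2 hp
    obtain ⟨j2, hj2, hl2, hnp2, hbet2⟩ := c2.2 hp2
    have hj12 : j1 = j2 := by
      rcases lt_trichotomy j1 j2 with hlt | heq | hlt
      · exact absurd ((spec_pointedUp h1).mpr ((spec_pointedUp h2).mp (hbet2 j1 hj1 hlt)))
          hnp1
      · exact heq
      · exact absurd ((spec_pointedUp h2).mpr ((spec_pointedUp h1).mp (hbet1 j2 hj2 hlt)))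
          hnp2
    rw [lOf_eq hl1, lOf_eq hl2, hj12]
  · have hp2 : ¬ PointedUp L2 (i, max (lOf M i) (lOf N i)) := fun hh =>
      hp ((spec_pointedUp h1).mpr ((spec_pointedUp h2).mp hh))
    rw [lOf_eq (c1.1 hp), lOf_eq (c2.1 hp2)]

theorem spec_isLeftArrow {L1 L2 : FB n} (h1 : MeetSpec n M N L1) (h2 : MeetSpec n M N L2)
    {c : Cell} (hl : IsLeftArrow L1 c) : IsLeftArrow L2 c := by
  obtain ⟨i, j⟩ := c
  have hb := leftArrow_bounds hl
  have hj : j = lOf L1 i := (lOf_eq hl).symm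
  rw [hj, spec_lOf_eq h1 h2 hb.1 hb.2.1]
  exact isLeftArrow_lOf L2 hb.1 hb.2.1

theorem spec_isFree {L1 L2 : FB n} (h1 : MeetSpec n M N L1) (h2 : MeetSpec n M N L2)
    {c : Cell} (hf : IsFree L1 c) : IsFree L2 c := by
  rw [isFree_iff] at hf ⊢
  obtain ⟨hc, hf1, hf2, hf3, hf4, hf5, hf6⟩ := hf
  rw [spec_uOf h1 hf1 hf2] at hf3
  rw [spec_lOf_eq h1 h2 hf4 hf5] at hf6
  rw [spec_uOf h2 hf1 hf2]
  exact ⟨hc, hf1, hf2, hf3, hf4, hf5, hf6⟩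

theorem spec_subset {L1 L2 : FB n} (h1 : MeetSpec n M N L1) (h2 : MeetSpec n M N L2) :
    L1.cells ⊆ L2.cells := by
  intro c hc
  rcases h1.2.2.2.2 c hc with hr | hl | hu | hf
  · rw [hr]; exact h2.1
  · exact (spec_isLeftArrow h1 h2 hl).1
  · obtain ⟨i, j⟩ := c
    have hb := (spec_isUpArrow h1).mp hu
    exact ((spec_isUpArrow h2).mpr hb).1
  · have hf2 : IsFree L2 c := spec_isFree h1 h2 hf
    have hrhs := (h1.2.2.2.1 c hf).mp hc
    exact (h2.2.2.2.1 c hf2).mpr hrhs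

theorem spec_unique {L1 L2 : FB n} (h1 : MeetSpec n M N L1) (h2 : MeetSpec n M N L2) :
    L1 = L2 :=
  FB.ext' (Set.Subset.antisymm (spec_subset h1 h2) (spec_subset h2 h1))

end Spec
/-- `(esTam n, ⊲)` is a lattice, and the meet of `M` and `N` is the
fb-tableau determined by the conditions (a)–(d) of `MeetSpec`. -/
theorem esTam_lattice_and_meet_description (n : ℕ) (hn : 1 ≤ n) :
    (∀ M N : FB n, ∃ L : FB n, IsMeet M N L) ∧
    (∀ M N : FB n, ∃ J : FB n, IsJoin M N J) ∧
    (∀ M N L : FB n, MeetSpec n M N L → IsMeet M N L) ∧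
    (∀ M N : FB n, ∃! L : FB n, MeetSpec n M N L) := by
  refine ⟨fun M N => ⟨meetFB M N hn, meet_isMeet M N hn⟩,
    fun M N => ⟨joinFB M N hn, join_isJoin M N hn⟩, fun M N L hL => ?_,
    fun M N => ⟨meetFB M N hn, meet_spec M N hn,
      fun L hL => spec_unique hL (meet_spec M N hn)⟩⟩
  have hEq := spec_unique hL (meet_spec M N hn)
  rw [hEq]
  exact meet_isMeet M N hn

end EsTam
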